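/- (The local Jacobian and the state transition naturally satisfy the observability constraints for the observability-constrained null space.) Fix g, p_F ∈ ℝ³ and a first-estimate matrix R̂_{G0} ∈ ℝ^{3×3}. For arbitrary J ∈ ℝ^{2×3} and arbitrary estimates R̂_I ∈ ℝ^{3×3}, v̂, p̂_I, p̂_f, p̂_G ∈ ℝ³: (i) the extended local-feature Jacobian H_L = −J R̂_Iᵀ [0₃ 0₃ I₃ −I₃ 0₃ 0₃ 0₃ 0₃ 0₃ 0₃ 0₃] satisfies H_L N*₃ = 0, and (ii) the 33×33 imperfect-system propagation matrix A* satisfies A* N*₃ = 0, hence exp(δ A*) N*₃ = N*₃ for every δ ∈ ℝ. -/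

import Mathlib

open Matrix

abbrev V3 := Fin 3 → ℝ
abbrev M3 := Matrix (Fin 3) (Fin 3) ℝ

/-- The cross-product (skew-symmetric) matrix `(a)_×`. -/
def skew (a : V3) : M3 :=
  !![0, -a 2, a 1; a 2, 0, -a 0; -a 1, a 0, 0]

/-- Row/column index of the 33-dimensional right-invariant error
`(ξ_θ, ξ_v, ξ_p, ξ_pf, ξ_pG, ξ_θG, ξ_bg, ξ_ba, ξ_θKF, ξ_pKF, ξ_F)`: 11 blocks of 3. -/
abbrev Idx33 := Fin 11 × Fin 3

/-- Column index for the 33×10 unobservable-direction matrix: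
one single column followed by three 3-column blocks. -/
abbrev Cols10 := Fin 1 ⊕ Fin 3 × Fin 3

/-- 33×33 matrix from an 11×11 table of 3×3 blocks. -/
def bm11 (f : Fin 11 → Fin 11 → M3) : Matrix Idx33 Idx33 ℝ :=
  Matrix.of fun p q => f p.1 q.1 p.2 q.2

/-- The 33×33 propagation matrix `A*` of the imperfect augmented system:
the upper-left 24×24 block is the perfect-system propagation matrix,
all other entries are zero. -/
def AStar (g : V3) (RI : M3) (v pI pf pG : V3) : Matrix Idx33 Idx33 ℝ :=
  bm11 ![![0, 0, 0, 0, 0, 0, -RI, 0, 0, 0, 0],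
         ![skew g, 0, 0, 0, 0, 0, -(skew v * RI), -RI, 0, 0, 0],
         ![0, 1, 0, 0, 0, 0, -(skew pI * RI), 0, 0, 0, 0],
         ![0, 0, 0, 0, 0, 0, -(skew pf * RI), 0, 0, 0, 0],
         ![0, 0, 0, 0, 0, 0, -(skew pG * RI), 0, 0, 0, 0],
         ![0, 0, 0, 0, 0, 0, 0, 0, 0, 0, 0],
         ![0, 0, 0, 0, 0, 0, 0, 0, 0, 0, 0],
         ![0, 0, 0, 0, 0, 0, 0, 0, 0, 0, 0],
         ![0, 0, 0, 0, 0, 0, 0, 0, 0, 0, 0],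
         ![0, 0, 0, 0, 0, 0, 0, 0, 0, 0, 0],
         ![0, 0, 0, 0, 0, 0, 0, 0, 0, 0, 0]]

/-- The 33×10 unobservable-direction matrix `N*₁` (parametric in `R_G`; `N*₃` is the
same matrix evaluated at the first-estimate `R̂_{G0}`). -/
def NStar1 (g pF : V3) (RG : M3) : Matrix Idx33 Cols10 ℝ :=
  Matrix.of fun p j =>
    Sum.elim
      (fun _ => (![g, 0, 0, 0, 0, g, 0, 0, 0, 0, 0] : Fin 11 → V3) p.1 p.2)
      (fun q =>
        (![![0, 0, 0], ![0, 0, 0], ![1, 0, 0], ![1, 0, 0], ![1, -RG, 0],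
           ![0, 0, 1], ![0, 0, 0], ![0, 0, 0], ![0, 0, -RGᵀ], ![0, 1, 0],
           ![0, 1, skew pF * RGᵀ]] : Fin 11 → Fin 3 → M3) p.1 q.1 p.2 q.2) j

/-- A 2×33 measurement Jacobian `B ⬝ [f₀ ⋯ f₁₀]` from a 2×3 factor `B`
and an 11-tuple of 3×3 blocks. -/
def rowJac (B : Matrix (Fin 2) (Fin 3) ℝ) (f : Fin 11 → M3) : Matrix (Fin 2) Idx33 ℝ :=
  Matrix.of fun r p => (B * f p.1) r p.2

section Aux

set_option maxHeartbeats 4000000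

/-- Generic form of the unobservable-direction matrix: a column block and an 11×3 block table. -/
def NStarG (c1 : Fin 11 → V3) (blk : Fin 11 → Fin 3 → M3) : Matrix Idx33 Cols10 ℝ :=
  Matrix.of fun p j => Sum.elim (fun _ => c1 p.1 p.2) (fun q => blk p.1 q.1 p.2 q.2) j

lemma NStar1_eq_NStarG (g pF : V3) (RG : M3) :
    NStar1 g pF RG = NStarG ![g, 0, 0, 0, 0, g, 0, 0, 0, 0, 0]
      ![![0, 0, 0], ![0, 0, 0], ![1, 0, 0], ![1, 0, 0], ![1, -RG, 0],
        ![0, 0, 1], ![0, 0, 0], ![0, 0, 0], ![0, 0, -RGᵀ], ![0, 1, 0],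
        ![0, 1, skew pF * RGᵀ]] := rfl

lemma bm11_mul_NStarG (f : Fin 11 → Fin 11 → M3) (c1 : Fin 11 → V3)
    (blk : Fin 11 → Fin 3 → M3) :
    bm11 f * NStarG c1 blk =
      NStarG (fun i => ∑ k : Fin 11, f i k *ᵥ c1 k)
        (fun i q => ∑ k : Fin 11, f i k * blk k q) := by
  ext ⟨i, a⟩ c
  rcases c with ⟨c⟩ | ⟨q, b⟩ <;>
    simp [Matrix.mul_apply, Fintype.sum_prod_type, NStarG, bm11, Matrix.mulVec,
      dotProduct, Finset.sum_apply, Matrix.sum_apply]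

lemma rowJac_mul_NStarG (B : Matrix (Fin 2) (Fin 3) ℝ) (f : Fin 11 → M3)
    (c1 : Fin 11 → V3) (blk : Fin 11 → Fin 3 → M3) :
    rowJac B f * NStarG c1 blk = Matrix.of fun r j =>
      Sum.elim (fun _ => (∑ k : Fin 11, (B * f k) *ᵥ c1 k) r)
        (fun q => (∑ k : Fin 11, B * f k * blk k q.1) r q.2) j := by
  ext r c
  rcases c with ⟨c⟩ | ⟨q, b⟩ <;>
    simp [Matrix.mul_apply, Fintype.sum_prod_type, NStarG, rowJac, Matrix.mulVec,
      dotProduct, Finset.sum_apply, Matrix.sum_apply]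

lemma exp_mul_eq_of_mul_eq_zero {I C : Type*} [Fintype I] [DecidableEq I] [Fintype C]
    (A : Matrix I I ℝ) (N : Matrix I C ℝ) (h : A * N = 0) :
    NormedSpace.exp A * N = N := by
  letI : NormedRing (Matrix I I ℝ) := Matrix.linftyOpNormedRing
  letI : NormedAlgebra ℝ (Matrix I I ℝ) := Matrix.linftyOpNormedAlgebra
  have hsum : Summable fun n : ℕ => ((n.factorial : ℝ))⁻¹ • A ^ n :=
    NormedSpace.expSeries_summable' A
  let L : Matrix I I ℝ →ₗ[ℝ] Matrix I C ℝ :=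
    { toFun := fun X => X * N
      map_add' := fun X Y => Matrix.add_mul X Y N
      map_smul' := fun c X => Matrix.smul_mul c X N }
  have hL : Continuous L := LinearMap.continuous_of_finiteDimensional L
  have : NormedSpace.exp A * N = ∑' n : ℕ, L (((n.factorial : ℝ))⁻¹ • A ^ n) := by
    rw [NormedSpace.exp_eq_tsum ℝ]
    exact (hsum.hasSum.mapL ⟨L, hL⟩).tsum_eq.symm
  rw [this]
  have hterm : ∀ n : ℕ, L (((n.factorial : ℝ))⁻¹ • A ^ n) = if n = 0 then N else 0 := by
    intro n
    cases n with
    | zero => simp [L]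
    | succ m =>
      have : A ^ (m + 1) * N = 0 := by rw [pow_succ, Matrix.mul_assoc, h, Matrix.mul_zero]
      simp [L, Matrix.smul_mul, this]
  calc (∑' n : ℕ, L (((n.factorial : ℝ))⁻¹ • A ^ n)) = ∑' n : ℕ, if n = 0 then N else 0 := by
        simp_rw [hterm]
    _ = N := by rw [tsum_eq_single 0 (by intro b hb; simp [hb])]; simp

lemma AStar_mul_NStar1 (g pF : V3) (RG0 : M3) (RI : M3) (v pI pf pG : V3) :
    AStar g RI v pI pf pG * NStar1 g pF RG0 = 0 := by
  rw [AStar, NStar1_eq_NStarG, bm11_mul_NStarG, ← Matrix.ext_iff]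
  simp [Prod.forall, Sum.forall, NStarG, Fin.forall_fin_succ,
    Fin.sum_univ_succ, Matrix.mulVec, dotProduct, Matrix.mul_apply,
    Fin.sum_univ_three, skew, Matrix.vecHead, Matrix.vecTail]
  try (and_intros <;> ring)

lemma rowJac_mul_NStar1 (g pF : V3) (RG0 : M3) (J : Matrix (Fin 2) (Fin 3) ℝ) (RI : M3) :
    rowJac (-(J * RIᵀ)) ![0, 0, 1, -1, 0, 0, 0, 0, 0, 0, 0] * NStar1 g pF RG0 = 0 := by
  rw [NStar1_eq_NStarG, rowJac_mul_NStarG, ← Matrix.ext_iff]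
  simp [Prod.forall, Sum.forall, Fin.forall_fin_succ,
    Fin.sum_univ_succ, Matrix.mulVec, dotProduct, Matrix.mul_apply,
    Fin.sum_univ_three, skew, Matrix.vecHead, Matrix.vecTail]

end Aux

/-- The local Jacobian and the state transition naturally satisfy the observability
constraints for the observability-constrained null space `N*₃ = N*₁(R̂_{G0})`. -/
theorem HL_AStar_annihilate_NStar3 (g pF : V3) (RG0 : M3)
    (J : Matrix (Fin 2) (Fin 3) ℝ) (RI : M3) (v pI pf pG : V3) :
    rowJac (-(J * RIᵀ)) ![0, 0, 1, -1, 0, 0, 0, 0, 0, 0, 0] * NStar1 g pF RG0 = 0 ∧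
    AStar g RI v pI pf pG * NStar1 g pF RG0 = 0 ∧
    ∀ δ : ℝ, NormedSpace.exp (δ • AStar g RI v pI pf pG) * NStar1 g pF RG0 =
      NStar1 g pF RG0 := by
  refine ⟨rowJac_mul_NStar1 g pF RG0 J RI, AStar_mul_NStar1 g pF RG0 RI v pI pf pG, fun δ => ?_⟩
  apply exp_mul_eq_of_mul_eq_zero
  rw [Matrix.smul_mul, AStar_mul_NStar1, smul_zero]
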